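/- (Theorem 3.1) Let G be a finite simple bipartite graph (i.e., G is 2-colorable) and k ≥ 1. Then G has a k-factor if and only if for every k-limited spanning subgraph M of G with σ(M) > 0 there exists an M-augmenting trail in G that is a path (visits no vertex more than once). -/

import Mathlib

open SimpleGraph

variable {V : Type*}

/-- The degree of a vertex `v` in a (sub)graph `M`. -/
noncomputable def mdeg (M : SimpleGraph V) (v : V) : ℕ := (M.neighborSet v).ncard

/-- `M` is a `k`-limited spanning subgraph of `G`: a subgraph on all the vertices of `G`
with all degrees at most `k`. -/
def IsKLimitedSpanning (G M : SimpleGraph V) (k : ℕ) : Prop :=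
  M ≤ G ∧ ∀ v : V, mdeg M v ≤ k

/-- `F` is a `k`-factor of `G`: a spanning subgraph all of whose degrees equal `k`. -/
def IsKFactor (G F : SimpleGraph V) (k : ℕ) : Prop :=
  F ≤ G ∧ ∀ v : V, mdeg F v = k

/-- The deficiency `σ(M) = ∑_{v} (k - deg_M v)`. -/
noncomputable def sigmaDef [Fintype V] (M : SimpleGraph V) (k : ℕ) : ℕ :=
  ∑ v : V, (k - mdeg M v)

/-- An `M`-alternating trail: a trail whose consecutive edges alternate between
membership and non-membership in `E(M)`. -/
def IsAltTrail {G : SimpleGraph V} (M : SimpleGraph V) {u v : V} (p : G.Walk u v) : Prop :=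
  p.IsTrail ∧ ∀ (i : ℕ) (h : i + 1 < p.edges.length),
    ((p.edges[i]'(Nat.lt_of_succ_lt h)) ∈ M.edgeSet ↔ (p.edges[i+1]'h) ∉ M.edgeSet)

/-- An `M`-augmenting trail (with respect to the bound `k`): an `M`-alternating trail whose
first and last edges are not in `E(M)`, whose endpoints are unfilled in `M`, all of whose
inner vertex visits are filled in `M`, and which, if closed at `v₀ = u = v`, additionally
satisfies `deg_M v₀ < k - 1`. -/
def IsAugTrail (G M : SimpleGraph V) (k : ℕ) {u v : V} (p : G.Walk u v) : Prop :=
  IsAltTrail M p ∧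
  p.edges ≠ [] ∧
  (∀ e, p.edges.head? = some e → e ∉ M.edgeSet) ∧
  (∀ e, p.edges.getLast? = some e → e ∉ M.edgeSet) ∧
  mdeg M u < k ∧ mdeg M v < k ∧
  (∀ w ∈ p.support.tail.dropLast, mdeg M w = k) ∧
  (u = v → mdeg M u < k - 1)

section Toolkit
open List
variable {α : Type*}

lemma head?_of_get {l : List α} (h : 0 < l.length) : l.head? = some (l.get ⟨0, h⟩) := by
  cases l with
  | nil => simp at h
  | cons a t => simp

lemma getLast?_of_get {l : List α} (h : 0 < l.length) :
    l.getLast? = some (l.get ⟨l.length - 1, by omega⟩) := by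
  rw [List.getLast?_eq_getLast (by rw [← List.length_pos_iff]; exact h), List.getLast_eq_getElem]
  simp

lemma getLast?_drop_of_lt {l : List α} {n : ℕ} (h : n < l.length) :
    (l.drop n).getLast? = l.getLast? := by
  have h1 : 0 < (l.drop n).length := by simp; omega
  rw [getLast?_of_get h1, getLast?_of_get (by omega : 0 < l.length)]
  simp only [List.get_eq_getElem, List.getElem_drop, List.length_drop]
  simp only [show n + (l.length - n - 1) = l.length - 1 from by omega]

lemma head?_drop_of_lt {l : List α} {n : ℕ} (h : n < l.length) :
    (l.drop n).head? = some (l.get ⟨n, h⟩) := by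
  have h1 : 0 < (l.drop n).length := by simp; omega
  rw [head?_of_get h1]
  simp [List.get_eq_getElem, List.getElem_drop]

lemma getLast?_take_of {l : List α} {n : ℕ} (h0 : 0 < n) (h : n ≤ l.length) :
    (l.take n).getLast? = some (l.get ⟨n - 1, by omega⟩) := by
  have h1 : 0 < (l.take n).length := by simp; omega
  rw [getLast?_of_get h1]
  simp only [List.get_eq_getElem, List.getElem_take, List.length_take]
  simp only [show min n l.length - 1 = n - 1 from by omega]
end Toolkit

section Toolkit2
variable {G : SimpleGraph V}



namespace SimpleGraph.Walk

lemma edges_get' {u v : V} (p : G.Walk u v) (i : ℕ) (h : i < p.edges.length) :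
    p.edges.get ⟨i, h⟩ = s(p.getVert i, p.getVert (i+1)) := by
  induction p generalizing i with
  | nil => simp at h
  | cons ha q ih =>
    cases i with
    | zero => simp [getVert]
    | succ n =>
      simp only [edges_cons, List.length_cons] at h ⊢
      simpa [getVert_cons_succ] using ih n (Nat.lt_of_succ_lt_succ h)

lemma support_get' {u v : V} (p : G.Walk u v) (i : ℕ) (h : i < p.support.length) :
    p.support.get ⟨i, h⟩ = p.getVert i := by
  induction p generalizing i with
  | nil =>
    cases i with
    | zero => simp [getVert]
    | succ n => simp at h
  | cons ha q ih =>
    cases i with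
    | zero => simp
    | succ n =>
      simp only [support_cons, List.length_cons] at h ⊢
      simpa [getVert_cons_succ] using ih n (Nat.lt_of_succ_lt_succ h)

/-- take the first `n` edges of a walk -/
def takeW : {u v : V} → (p : G.Walk u v) → (n : ℕ) → G.Walk u (p.getVert n)
  | _, _, p, 0 => Walk.nil.copy rfl (p.getVert_zero).symm
  | _, _, Walk.nil, _+1 => Walk.nil.copy rfl (by simp [Walk.getVert_of_length_le])
  | _, _, Walk.cons h q, n+1 => Walk.cons h (takeW q n)


lemma edges_takeW {u v : V} (p : G.Walk u v) (n : ℕ) :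
    (p.takeW n).edges = p.edges.take n := by
  induction p generalizing n with
  | nil => cases n <;> simp [takeW]
  | cons ha q ih =>
    cases n with
    | zero => simp [takeW]
    | succ m => simp [takeW, ih]

lemma length_takeW {u v : V} (p : G.Walk u v) (n : ℕ) :
    (p.takeW n).length = min n p.length := by
  have := edges_takeW p n
  have h1 : (p.takeW n).edges.length = (p.edges.take n).length := by rw [this]
  simpa [length_edges] using h1

lemma getVert_takeW {u v : V} (p : G.Walk u v) (n i : ℕ) (hi : i ≤ n) :
    (p.takeW n).getVert i = p.getVert i := by
  induction p generalizing n i with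
  | nil => cases n <;> simp [takeW, getVert_of_length_le]
  | cons ha q ih =>
    cases n with
    | zero => interval_cases i; simp [takeW]
    | succ m =>
      cases i with
      | zero => simp [takeW]
      | succ j => simpa [takeW, getVert_cons_succ] using ih m j (Nat.le_of_succ_le_succ hi)

lemma length_drop' {u v : V} (p : G.Walk u v) (n : ℕ) :
    (p.drop n).length = p.length - n := by
  have := edges_drop p n
  have h1 : (p.drop n).edges.length = (p.edges.drop n).length := by rw [this]
  simpa [length_edges] using h1

lemma getVert_drop' {u v : V} (p : G.Walk u v) (n i : ℕ) :
    (p.drop n).getVert i = p.getVert (n + i) := by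
  induction p generalizing n i with
  | nil => cases n <;> simp [drop, getVert_of_length_le]
  | cons ha q ih =>
    cases n with
    | zero => simp [drop]
    | succ m => simp [drop, ih, getVert_cons_succ, Nat.succ_add]

end SimpleGraph.Walk
end Toolkit2

section Parity
variable {G : SimpleGraph V}



section parity

lemma zmod2_ne_iff {a b : ZMod 2} : a ≠ b ↔ b = a + 1 := by revert a b; decide

lemma walk_parity (C : G.Coloring (ZMod 2)) {u v : V} (p : G.Walk u v) :
    (C v : ZMod 2) = C u + p.length := by
  induction p with
  | nil => simp
  | @cons u x v ha q ih =>
    have hne : C u ≠ C x := C.valid ha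
    rw [zmod2_ne_iff] at hne
    rw [ih, hne]
    push_cast [SimpleGraph.Walk.length_cons]
    ring

lemma closed_walk_even (C : G.Coloring (ZMod 2)) {u : V} (p : G.Walk u u) :
    Even p.length := by
  have h := walk_parity C p
  have h2 : ((p.length : ZMod 2)) = 0 := (left_eq_add.mp h)
  rw [even_iff_two_dvd]
  exact (ZMod.natCast_eq_zero_iff p.length 2).mp h2

variable {α : Type*}

lemma chain'_parity {S : Set α} {l : List α}
    (hc : l.Chain' (fun e f => e ∈ S ↔ f ∉ S))
    (h0 : ∀ e, l.head? = some e → e ∉ S) :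
    ∀ (i : ℕ) (h : i < l.length), (l.get ⟨i, h⟩ ∈ S ↔ Odd i) := by
  intro i
  induction i with
  | zero =>
    intro h
    have hh : l.head? = some (l.get ⟨0, h⟩) := by
      cases l with
      | nil => simp at h
      | cons a t => simp
    exact iff_of_false (h0 _ hh) (by simp)
  | succ n ih =>
    intro h
    have hn : n < l.length := Nat.lt_of_succ_lt h
    have hrel := (List.isChain_iff_getElem.mp hc) n (by omega)
    have h1 := ih hn
    have h3 : (l.get ⟨n+1, h⟩ ∈ S ↔ ¬ (l.get ⟨n, hn⟩ ∈ S)) := by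
      constructor
      · intro hx hy
        exact (hrel.mp hy) (by simpa using hx)
      · intro hx
        by_contra hy
        exact hx (hrel.mpr (by simpa using hy))
    rw [h3, h1, Nat.odd_add_one, Nat.not_odd_iff_even]

/-- alternating + first and last not in S implies odd length -/
lemma chain'_odd_length {S : Set α} {l : List α}
    (hc : l.Chain' (fun e f => e ∈ S ↔ f ∉ S))
    (h0 : ∀ e, l.head? = some e → e ∉ S)
    (hl : ∀ e, l.getLast? = some e → e ∉ S)
    (hne : l ≠ []) : Odd l.length := by
  have hlen : 0 < l.length := List.length_pos_iff.mpr hne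
  have hlast : l.getLast? = some (l.get ⟨l.length - 1, by omega⟩) := by
    exact getLast?_of_get hlen
  have := hl _ hlast
  have hpar := chain'_parity hc h0 (l.length - 1) (by omega)
  have : ¬ Odd (l.length - 1) := fun ho => this (hpar.mpr ho)
  rw [Nat.not_odd_iff_even] at this
  rcases this with ⟨m, hm⟩
  exact ⟨m, by omega⟩

end parity
end Parity

section MinWalk

variable {G M : SimpleGraph V} {k : ℕ}

/-- the alternation relation on edges -/
def altRel (M : SimpleGraph V) : Sym2 V → Sym2 V → Prop :=
  fun e f => e ∈ M.edgeSet ↔ f ∉ M.edgeSet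

lemma isAltTrail_iff {u v : V} (p : G.Walk u v) :
    IsAltTrail M p ↔ p.IsTrail ∧ p.edges.Chain' (altRel M) := by
  unfold IsAltTrail altRel
  refine and_congr_right fun _ => ?_
  rw [List.Chain', List.isChain_iff_getElem]

/-- The class of alternating walks with deficient endpoints and first/last edge outside `M`. -/
def WW (G M : SimpleGraph V) (k : ℕ) {a b : V} (p : G.Walk a b) : Prop :=
  p.edges ≠ [] ∧ p.edges.Chain' (altRel M) ∧
  (∀ e, p.edges.head? = some e → e ∉ M.edgeSet) ∧
  (∀ e, p.edges.getLast? = some e → e ∉ M.edgeSet) ∧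
  mdeg M a < k ∧ mdeg M b < k

lemma WW.min_aug (C : G.Coloring (ZMod 2)) (hlim : ∀ v : V, mdeg M v ≤ k)
    {a b : V} (p : G.Walk a b) (hp : WW G M k p)
    (hmin : ∀ (a' b' : V) (q : G.Walk a' b'), WW G M k q → p.length ≤ q.length) :
    IsAugTrail G M k p ∧ p.IsPath := by
  obtain ⟨hne, hchain, hhead, hlast, hda, hdb⟩ := hp
  have hL : 0 < p.length := by
    rw [← p.length_edges]
    exact List.length_pos_iff.mpr hne
  have hpar : ∀ (i : ℕ) (h : i < p.edges.length),
      (p.edges.get ⟨i, h⟩ ∈ M.edgeSet ↔ Odd i) := chain'_parity hchain hhead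
  -- step 1 : endpoints are distinct
  have hab : a ≠ b := by
    intro h
    subst h
    have hodd : Odd p.edges.length := chain'_odd_length hchain hhead hlast hne
    have heven : Even p.length := closed_walk_even C p
    rw [p.length_edges] at hodd
    rw [Nat.odd_iff] at hodd
    rw [Nat.even_iff] at heven
    omega
  -- step 2 : inner vertices are filled
  have hfill : ∀ i : ℕ, 0 < i → i < p.length → mdeg M (p.getVert i) = k := by
    intro i hi0 hiL
    by_contra hineq
    have hdefw : mdeg M (p.getVert i) < k := lt_of_le_of_ne (hlim _) hineq
    rcases Nat.even_or_odd i with hev | hod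
    · -- `i` even: drop the first `i` edges
      have hWW : WW G M k (p.drop i) := by
        refine ⟨?_, ?_, ?_, ?_, hdefw, hdb⟩
        · rw [SimpleGraph.Walk.edges_drop]
          apply List.ne_nil_of_length_pos
          rw [List.length_drop, p.length_edges]
          omega
        · rw [SimpleGraph.Walk.edges_drop]
          exact hchain.drop i
        · rw [SimpleGraph.Walk.edges_drop]
          intro e he
          rw [head?_drop_of_lt (by rw [p.length_edges]; omega)] at he
          have hpi := hpar i (by rw [p.length_edges]; omega)
          rw [(Option.some_inj).mp he] at hpi
          intro hmem
          have := hpi.mp hmem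
          rw [Nat.odd_iff] at this
          rw [Nat.even_iff] at hev
          omega
        · rw [SimpleGraph.Walk.edges_drop]
          intro e he
          rw [getLast?_drop_of_lt (by rw [p.length_edges]; omega)] at he
          exact hlast e he
      have := hmin _ _ _ hWW
      rw [SimpleGraph.Walk.length_drop'] at this
      omega
    · -- `i` odd: take the first `i` edges
      have hWW : WW G M k (p.takeW i) := by
        refine ⟨?_, ?_, ?_, ?_, hda, hdefw⟩
        · rw [SimpleGraph.Walk.edges_takeW]
          apply List.ne_nil_of_length_pos
          rw [List.length_take, p.length_edges]
          omega
        · rw [SimpleGraph.Walk.edges_takeW]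
          exact hchain.take i
        · rw [SimpleGraph.Walk.edges_takeW]
          intro e he
          rw [List.head?_take, if_neg (by omega)] at he
          exact hhead e he
        · rw [SimpleGraph.Walk.edges_takeW]
          intro e he
          rw [getLast?_take_of hi0 (by rw [p.length_edges]; omega)] at he
          have hpi := hpar (i-1) (by rw [p.length_edges]; omega)
          rw [(Option.some_inj).mp he] at hpi
          intro hmem
          have := hpi.mp hmem
          rw [Nat.odd_iff] at this hod
          omega
      have := hmin _ _ _ hWW
      rw [SimpleGraph.Walk.length_takeW] at this
      omega
  -- step 3 : getVert is injective
  have hinj : ∀ i j : ℕ, i < j → j ≤ p.length → p.getVert i ≠ p.getVert j := by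
    intro i j hij hjL heq
    by_cases hi0 : i = 0
    · subst hi0
      rw [p.getVert_zero] at heq
      by_cases hjL' : j = p.length
      · subst hjL'
        rw [p.getVert_length] at heq
        exact hab heq
      · have := hfill j hij (lt_of_le_of_ne hjL hjL')
        rw [← heq] at this
        omega
    · have hi0' : 0 < i := Nat.pos_of_ne_zero hi0
      by_cases hjL' : j = p.length
      · subst hjL'
        rw [p.getVert_length] at heq
        have := hfill i hi0' hij
        rw [heq] at this
        omega
      · have hjlt : j < p.length := lt_of_le_of_ne hjL hjL'
        -- even closed segment
        have heven : Even (j - i) := by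
          have hseg : (p.drop i).getVert (j - i) = p.getVert i := by
            rw [SimpleGraph.Walk.getVert_drop', show i + (j-i) = j from by omega, ← heq]
          have := closed_walk_even C (((p.drop i).takeW (j - i)).copy rfl hseg)
          rwa [SimpleGraph.Walk.length_copy, SimpleGraph.Walk.length_takeW,
            SimpleGraph.Walk.length_drop',
            show min (j-i) (p.length - i) = j - i from by omega] at this
        -- splice out the closed segment
        have hWW : WW G M k ((p.takeW i).append ((p.drop j).copy heq.symm rfl)) := by
          have hedges : ((p.takeW i).append ((p.drop j).copy heq.symm rfl)).edges
              = p.edges.take i ++ p.edges.drop j := by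
            rw [SimpleGraph.Walk.edges_append, SimpleGraph.Walk.edges_copy,
              SimpleGraph.Walk.edges_takeW, SimpleGraph.Walk.edges_drop]
          have htne : p.edges.take i ≠ [] := by
            apply List.ne_nil_of_length_pos
            rw [List.length_take, p.length_edges]
            omega
          refine ⟨?_, ?_, ?_, ?_, hda, hdb⟩
          · rw [hedges]
            intro hcon
            exact htne (List.append_eq_nil_iff.mp hcon).1
          · rw [hedges]
            rw [List.Chain', List.isChain_append]
            refine ⟨hchain.take i, hchain.drop j, ?_⟩
            intro x hx y hy
            rw [getLast?_take_of hi0' (by rw [p.length_edges]; omega)] at hx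
            rw [head?_drop_of_lt (by rw [p.length_edges]; omega)] at hy
            simp only [Option.mem_def, Option.some_inj] at hx hy
            subst hx; subst hy
            unfold altRel
            rw [hpar (i-1) (by rw [p.length_edges]; omega), hpar j (by rw [p.length_edges]; omega)]
            rw [Nat.odd_iff, Nat.odd_iff]
            rw [Nat.even_iff] at heven
            omega
          · rw [hedges]
            intro e he
            rw [List.head?_append_of_ne_nil _ htne, List.head?_take, if_neg (by omega)] at he
            exact hhead e he
          · rw [hedges]
            intro e he
            rw [List.getLast?_append, getLast?_drop_of_lt (by rw [p.length_edges]; omega),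
              getLast?_of_get (show 0 < p.edges.length by rw [p.length_edges]; omega)] at he
            rw [show ∀ (o : Option (Sym2 V)) (g : Sym2 V), (some g).or o = some g from fun _ _ => rfl] at he
            exact hlast e (by
              rw [getLast?_of_get (show 0 < p.edges.length by rw [p.length_edges]; omega)]
              exact he)
        have := hmin _ _ _ hWW
        rw [SimpleGraph.Walk.length_append, SimpleGraph.Walk.length_copy,
          SimpleGraph.Walk.length_takeW, SimpleGraph.Walk.length_drop'] at this
        omega
  -- step 4 : nodup support
  have hnodup : p.support.Nodup := by
    rw [List.nodup_iff_injective_get]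
    rintro ⟨i, hi⟩ ⟨j, hj⟩ heq
    rw [p.support_get', p.support_get'] at heq
    have hi' : i < p.length + 1 := by simpa [p.length_support] using hi
    have hj' : j < p.length + 1 := by simpa [p.length_support] using hj
    rcases Nat.lt_trichotomy i j with h | h | h
    · exact absurd heq (hinj i j h (by omega))
    · exact Fin.mk_eq_mk.mpr h
    · exact absurd heq.symm (hinj j i h (by omega))
  have hpath : p.IsPath := SimpleGraph.Walk.IsPath.mk' hnodup
  refine ⟨⟨(isAltTrail_iff p).mpr ⟨hpath.isTrail, hchain⟩, hne, hhead, hlast, hda, hdb, ?_, ?_⟩, hpath⟩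
  · intro w hw
    rw [List.mem_iff_get] at hw
    obtain ⟨⟨j, hj⟩, hwj⟩ := hw
    have hlen2 : p.support.tail.dropLast.length = p.length - 1 := by
      rw [List.length_dropLast, List.length_tail, p.length_support]
      omega
    rw [hlen2] at hj
    have : p.support.tail.dropLast.get ⟨j, by rw [hlen2]; omega⟩
        = p.getVert (j+1) := by
      rw [List.get_eq_getElem, List.getElem_dropLast, List.getElem_tail]
      have h9 := p.support_get' (j+1) (by rw [p.length_support]; omega)
      simpa [List.get_eq_getElem] using h9
    rw [this] at hwj
    rw [← hwj]
    exact hfill (j+1) (by omega) (by omega)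
  · intro h
    exact absurd h hab

end MinWalk

section Exists

/-- iterate a partial map -/
def orbitFn {S : Type*} (step : S → Option S) (s0 : S) : ℕ → Option S
  | 0 => some s0
  | n+1 => (orbitFn step s0 n).bind step

lemma orbit_stops {S : Type*} [Finite S] (step : S → Option S) (s0 : S)
    (hinj : ∀ a b t, step a = some t → step b = some t → a = b)
    (h0 : ∀ a, step a ≠ some s0) :
    ∃ N sN, orbitFn step s0 N = some sN ∧ step sN = none ∧
      ∀ n, n ≤ N → (orbitFn step s0 n).isSome := by
  classical
  set g := orbitFn step s0 with hg
  have hg0 : g 0 = some s0 := rfl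
  have hgs : ∀ n, g (n+1) = (g n).bind step := fun n => rfl
  have ginj : ∀ m n s, g m = some s → g n = some s → m = n := by
    intro m
    induction m with
    | zero =>
      intro n s h1 h2
      cases n with
      | zero => rfl
      | succ j =>
        exfalso
        rw [hgs] at h2
        rcases ho : g j with _ | t
        · rw [ho] at h2; simp at h2
        · rw [ho] at h2
          simp only [Option.bind_some] at h2
          rw [hg0] at h1
          have : s = s0 := by simpa using h1.symm
          exact h0 t (by rw [h2, this])
    | succ i ih =>
      intro n s h1 h2
      cases n with
      | zero =>
        exfalso
        rw [hgs] at h1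
        rcases ho : g i with _ | t
        · rw [ho] at h1; simp at h1
        · rw [ho] at h1
          simp only [Option.bind_some] at h1
          rw [hg0] at h2
          have : s = s0 := by simpa using h2.symm
          exact h0 t (by rw [h1, this])
      | succ j =>
        rw [hgs] at h1 h2
        rcases ho1 : g i with _ | t1
        · rw [ho1] at h1; simp at h1
        · rcases ho2 : g j with _ | t2
          · rw [ho2] at h2; simp at h2
          · rw [ho1] at h1
            rw [ho2] at h2
            simp only [Option.bind_some] at h1 h2
            have ht : t1 = t2 := hinj t1 t2 s h1 h2
            rw [ht] at ho1
            have := ih j t2 ho1 ho2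
            omega
  by_cases hnone : ∃ n, g n = none
  · have hex : ∃ n, g n = none := hnone
    set N0 := Nat.find hex with hN0
    have hN0none : g N0 = none := Nat.find_spec hex
    have hN0pos : 0 < N0 := by
      rcases Nat.eq_zero_or_pos N0 with h | h
      · rw [h, hg0] at hN0none; simp at hN0none
      · exact h
    have hlt : ∀ n, n < N0 → (g n).isSome := by
      intro n hn
      have := Nat.find_min hex hn
      rcases h : g n with _ | t
      · exact absurd h this
      · simp
    obtain ⟨sN, hsN⟩ := Option.isSome_iff_exists.mp (hlt (N0 - 1) (by omega))
    refine ⟨N0 - 1, sN, hsN, ?_, fun n hn => hlt n (by omega)⟩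
    have : g (N0 - 1 + 1) = none := by rw [show N0 - 1 + 1 = N0 from by omega]; exact hN0none
    rw [hgs, hsN] at this
    simpa using this
  · exfalso
    push_neg at hnone
    have htot : ∀ n, ∃ s, g n = some s := by
      intro n
      rcases h : g n with _ | t
      · exact absurd h (hnone n)
      · exact ⟨t, rfl⟩
    choose f hf using htot
    have hfinj : Function.Injective f := by
      intro m n h
      exact ginj m n (f m) (hf m) (by rw [h]; exact hf n)
    obtain ⟨x, y, hxy, hfe⟩ := Finite.exists_ne_map_eq_of_infinite f
    exact hxy (hfinj hfe)

variable {G M F : SimpleGraph V} {k : ℕ}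

open Classical in
/-- the one-step map of the alternating-walk construction -/
noncomputable def stepFn [Fintype V] (M : SimpleGraph V) (k : ℕ)
    (Bf : V → Finset V) (f : V → V → V) : V × V → Option (V × V) :=
  fun s => if h : mdeg M s.1 = k ∧ ∃ y ∈ Bf s.1, f s.1 y = s.2 then
    some (f h.2.choose s.1, h.2.choose)
  else none

lemma mdeg_eq_degree [Fintype V] (H : SimpleGraph V) [DecidableRel H.Adj] (w : V) :
    mdeg H w = H.degree w := by
  rw [mdeg, ← Nat.card_coe_set_eq, Nat.card_eq_fintype_card,
    SimpleGraph.card_neighborSet_eq_degree]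

lemma exists_WW [Fintype V] (hF : IsKFactor G F k) (hMG : M ≤ G)
    (hlim : ∀ v : V, mdeg M v ≤ k) {u : V} (hu : mdeg M u < k) :
    ∃ (a b : V), ∃ p : G.Walk a b, WW G M k p := by
  classical
  set Af : V → Finset V := fun w => F.neighborFinset w \ M.neighborFinset w with hAf
  set Bf : V → Finset V := fun w => M.neighborFinset w \ F.neighborFinset w with hBf
  have hmemA : ∀ w x, x ∈ Af w ↔ (F.Adj w x ∧ ¬ M.Adj w x) := by
    intro w x; simp [hAf, SimpleGraph.mem_neighborFinset]
  have hmemB : ∀ w x, x ∈ Bf w ↔ (M.Adj w x ∧ ¬ F.Adj w x) := by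
    intro w x; simp [hBf, SimpleGraph.mem_neighborFinset]
  have hAsymm : ∀ w x, x ∈ Af w → w ∈ Af x := by
    intro w x hx
    rw [hmemA] at hx ⊢
    exact ⟨hx.1.symm, fun h => hx.2 h.symm⟩
  have hBsymm : ∀ w x, x ∈ Bf w → w ∈ Bf x := by
    intro w x hx
    rw [hmemB] at hx ⊢
    exact ⟨hx.1.symm, fun h => hx.2 h.symm⟩
  -- cardinalities
  have hcard : ∀ w, (Bf w).card + k = (Af w).card + mdeg M w := by
    intro w
    have h1 : (Af w).card + (F.neighborFinset w ∩ M.neighborFinset w).card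
        = (F.neighborFinset w).card := Finset.card_sdiff_add_card_inter _ _
    have h2 : (Bf w).card + (M.neighborFinset w ∩ F.neighborFinset w).card
        = (M.neighborFinset w).card := Finset.card_sdiff_add_card_inter _ _
    have h3 : (F.neighborFinset w).card = k := by
      rw [← SimpleGraph.degree, ← mdeg_eq_degree]; exact hF.2 w
    have h4 : (M.neighborFinset w).card = mdeg M w := by
      rw [← SimpleGraph.degree, ← mdeg_eq_degree]
    rw [Finset.inter_comm] at h1
    omega
  -- the injections f w : Bf w ↪ Af w, as plain functions
  have hψ : ∀ w : V, ∃ f : V → V, Set.MapsTo f (Bf w) (Af w) ∧ Set.InjOn f (Bf w) ∧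
      (mdeg M w = k → Set.SurjOn f (Bf w) (Af w)) := by
    intro w
    haveI : Nonempty V := ⟨w⟩
    have hle : (Bf w).card ≤ (Af w).card := by have := hcard w; have := hlim w; omega
    have hfin : (↑(Bf w) : Set V).Finite := (Bf w).finite_toSet
    have henc : (↑(Bf w) : Set V).encard ≤ (↑(Af w) : Set V).encard := by
      rw [Set.encard_coe_eq_coe_finsetCard, Set.encard_coe_eq_coe_finsetCard]
      exact_mod_cast hle
    obtain ⟨f, hfsub, hfinj⟩ := hfin.exists_injOn_of_encard_le henc
    refine ⟨f, fun x hx => hfsub hx, hfinj, ?_⟩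
    intro hdeg
    have hcardeq : (↑(Bf w) : Set V).encard = (↑(Af w) : Set V).encard := by
      rw [Set.encard_coe_eq_coe_finsetCard, Set.encard_coe_eq_coe_finsetCard]
      exact_mod_cast (by have := hcard w; omega : (Bf w).card = (Af w).card)
    have himsub : f '' ↑(Bf w) ⊆ ↑(Af w) := by
      rintro _ ⟨x, hx, rfl⟩
      exact hfsub hx
    have himeq : f '' ↑(Bf w) = ↑(Af w) := by
      apply Set.Finite.eq_of_subset_of_encard_le' (Af w).finite_toSet himsub
      rw [hfinj.encard_image, hcardeq]
    intro z hz
    rw [← himeq] at hz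
    exact hz
  choose f hfmap hfinj hfsurj using hψ
  -- the step function and its properties
  set step := stepFn M k Bf f with hstep
  have hstep_eq : ∀ w z (h : mdeg M w = k ∧ ∃ y ∈ Bf w, f w y = z),
      step (w, z) = some (f h.2.choose w, h.2.choose) := by
    intro w z h
    rw [hstep, stepFn]
    rw [dif_pos h]
  have hstep_none : ∀ w z, ¬ (mdeg M w = k ∧ ∃ y ∈ Bf w, f w y = z) → step (w, z) = none := by
    intro w z h
    rw [hstep, stepFn]
    rw [dif_neg h]
  -- structure of a successful step
  have hstep_some : ∀ w z x y, step (w, z) = some (x, y) →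
      mdeg M w = k ∧ y ∈ Bf w ∧ f w y = z ∧ x = f y w := by
    intro w z x y hs
    by_cases h : mdeg M w = k ∧ ∃ y ∈ Bf w, f w y = z
    · rw [hstep_eq w z h] at hs
      obtain ⟨hy1, hy2⟩ := h.2.choose_spec
      have h1 : f h.2.choose w = x := (Prod.mk.injEq _ _ _ _ ▸ (Option.some_inj.mp hs)).1
      have h2 : h.2.choose = y := (Prod.mk.injEq _ _ _ _ ▸ (Option.some_inj.mp hs)).2
      rw [h2] at hy1 hy2 h1
      exact ⟨h.1, hy1, hy2, h1.symm⟩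
    · rw [hstep_none w z h] at hs
      simp at hs
  -- injectivity of step
  have hstepinj : ∀ a b t, step a = some t → step b = some t → a = b := by
    rintro ⟨w, z⟩ ⟨w', z'⟩ ⟨x, y⟩ h1 h2
    obtain ⟨hd1, hy1, hz1, hx1⟩ := hstep_some _ _ _ _ h1
    obtain ⟨hd2, hy2, hz2, hx2⟩ := hstep_some _ _ _ _ h2
    have hww : w = w' := by
      have hw1 : w ∈ Bf y := hBsymm _ _ hy1
      have hw2 : w' ∈ Bf y := hBsymm _ _ hy2
      exact hfinj y hw1 hw2 (by rw [← hx1, ← hx2])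
    subst hww
    have : z = z' := by rw [← hz1, ← hz2]
    rw [this]
  -- initial state
  have hBAu : (Bf u).card < (Af u).card := by have := hcard u; omega
  obtain ⟨x1, hx1A, hx1r⟩ : ∃ x1 ∈ Af u, x1 ∉ (Bf u).image (f u) := by
    have hsub : ¬ Af u ⊆ (Bf u).image (f u) := by
      intro hsub
      have h1 := Finset.card_le_card hsub
      have h2 := Finset.card_image_le (s := Bf u) (f := f u)
      omega
    exact Finset.not_subset.mp hsub
  set s0 : V × V := (x1, u) with hs0
  have h0 : ∀ a, step a ≠ some s0 := by
    rintro ⟨w, z⟩ hcon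
    obtain ⟨hd, hy, hz, hx⟩ := hstep_some w z x1 u hcon
    have hwBu : w ∈ Bf u := hBsymm _ _ hy
    exact hx1r (Finset.mem_image.mpr ⟨w, hwBu, hx.symm⟩)
  obtain ⟨N, sN, hgN, hstepN, hgsome⟩ := orbit_stops step s0 hstepinj h0
  -- invariant : the second coordinate is an A-neighbour of the first
  have hinv : ∀ n s, orbitFn step s0 n = some s → s.2 ∈ Af s.1 := by
    intro n
    induction n with
    | zero =>
      intro s hs
      have hss : s0 = s := by simpa [orbitFn] using hs
      rw [← hss]
      exact hAsymm _ _ hx1A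
    | succ m ih =>
      intro s hs
      have hb : (orbitFn step s0 m).bind step = some s := hs
      rcases ho : orbitFn step s0 m with _ | t
      · rw [ho] at hb; simp at hb
      · rw [ho] at hb
        simp only [Option.bind_some] at hb
        obtain ⟨x, y⟩ := s
        obtain ⟨hd, hy, hz, hx⟩ := hstep_some t.1 t.2 x y hb
        have hwB : t.1 ∈ Bf y := hBsymm _ _ hy
        have hfA : f y t.1 ∈ Af y := by
          have := hfmap y (by simpa using hwB)
          simpa using this
        rw [← hx] at hfA
        exact hAsymm _ _ hfA
  -- the final vertex is deficient
  have hsNdef : mdeg M sN.1 < k := by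
    rcases Nat.lt_or_ge (mdeg M sN.1) k with h | h
    · exact h
    · exfalso
      have hdeg : mdeg M sN.1 = k := le_antisymm (hlim _) h
      have hAinv : sN.2 ∈ Af sN.1 := hinv N sN hgN
      obtain ⟨y, hyB, hyf⟩ := hfsurj sN.1 hdeg (by simpa using hAinv)
      have hcond : mdeg M sN.1 = k ∧ ∃ y ∈ Bf sN.1, f sN.1 y = sN.2 :=
        ⟨hdeg, y, by simpa using hyB, hyf⟩
      have := hstep_eq sN.1 sN.2 hcond
      rw [show ((sN.1, sN.2) : V × V) = sN from rfl, hstepN] at this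
      simp at this
  -- build the alternating walk following the orbit
  have hbuild : ∀ d n s, orbitFn step s0 n = some s → n + d = N →
      ∃ q : G.Walk s.1 sN.1,
        q.edges.Chain' (altRel M) ∧
        (∀ e, q.edges.head? = some e → e ∈ M.edgeSet) ∧
        (∀ e, q.edges.getLast? = some e → e ∉ M.edgeSet) := by
    intro d
    induction d with
    | zero =>
      intro n s hgn hnN
      have hnN' : n = N := by omega
      rw [hnN'] at hgn
      have hs : sN = s := by rw [hgN] at hgn; simpa using hgn
      subst hs
      exact ⟨SimpleGraph.Walk.nil, List.isChain_nil, by simp, by simp⟩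
    | succ d ih =>
      intro n s hgn hnN
      obtain ⟨s', hs'⟩ := Option.isSome_iff_exists.mp (hgsome (n+1) (by omega))
      have hstep1 : step s = some s' := by
        have hrec : orbitFn step s0 (n+1) = (orbitFn step s0 n).bind step := rfl
        rw [hs', hgn] at hrec
        simpa using hrec.symm
      obtain ⟨q', hch, hhd, hlt'⟩ := ih (n+1) s' hs' (by omega)
      obtain ⟨w, z⟩ := s
      obtain ⟨x, y⟩ := s'
      obtain ⟨hd, hyB, hzf, hxf⟩ := hstep_some w z x y hstep1
      have hMadj : M.Adj w y := ((hmemB w y).mp hyB).1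
      have hxA : x ∈ Af y := by
        have hwB : w ∈ Bf y := hBsymm _ _ hyB
        have hfA : f y w ∈ Af y := by
          have := hfmap y (by simpa using hwB)
          simpa using this
        rwa [← hxf] at hfA
      have hFadj : F.Adj y x := ((hmemA y x).mp hxA).1
      have hMnadj : ¬ M.Adj y x := ((hmemA y x).mp hxA).2
      have hG1 : G.Adj w y := hMG hMadj
      have hG2 : G.Adj y x := hF.1 hFadj
      refine ⟨SimpleGraph.Walk.cons hG1 (SimpleGraph.Walk.cons hG2 q'), ?_, ?_, ?_⟩
      · rw [SimpleGraph.Walk.edges_cons, SimpleGraph.Walk.edges_cons, List.Chain', List.isChain_cons]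
        constructor
        · intro e he
          simp only [List.head?_cons, Option.mem_def, Option.some_inj] at he
          subst he
          unfold altRel
          rw [SimpleGraph.mem_edgeSet, SimpleGraph.mem_edgeSet]
          exact iff_of_true hMadj hMnadj
        · rw [List.isChain_cons]
          refine ⟨?_, hch⟩
          intro g hg
          have hgM := hhd g (Option.mem_def.mp hg)
          unfold altRel
          rw [SimpleGraph.mem_edgeSet]
          constructor
          · intro hcon; exact absurd hcon hMnadj
          · intro hcon; exact absurd hgM hcon
      · intro e he
        rw [SimpleGraph.Walk.edges_cons, List.head?_cons, Option.some_inj] at he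
        subst he
        rwa [SimpleGraph.mem_edgeSet]
      · intro e he
        rw [SimpleGraph.Walk.edges_cons, SimpleGraph.Walk.edges_cons,
          List.getLast?_cons_cons] at he
        rcases hl : q'.edges with _ | ⟨g, gs⟩
        · rw [hl] at he
          simp only [List.getLast?_singleton, Option.some_inj] at he
          subst he
          rwa [SimpleGraph.mem_edgeSet]
        · rw [hl] at he
          exact hlt' e (by rw [hl]; exact he)
  obtain ⟨q, hch, hhd, hlt'⟩ := hbuild N 0 s0 rfl (by omega)
  have hx1A' : F.Adj u x1 ∧ ¬ M.Adj u x1 := (hmemA u x1).mp hx1A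
  have hG0 : G.Adj u x1 := hF.1 hx1A'.1
  refine ⟨u, sN.1, SimpleGraph.Walk.cons hG0 q, ?_, ?_, ?_, ?_, hu, hsNdef⟩
  · simp
  · rw [SimpleGraph.Walk.edges_cons, List.Chain', List.isChain_cons]
    refine ⟨?_, hch⟩
    intro g hg
    have hgM := hhd g (Option.mem_def.mp hg)
    unfold altRel
    rw [SimpleGraph.mem_edgeSet]
    constructor
    · intro hcon; exact absurd hcon hx1A'.2
    · intro hcon; exact absurd hgM hcon
  · intro e he
    rw [SimpleGraph.Walk.edges_cons, List.head?_cons, Option.some_inj] at he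
    subst he
    rw [SimpleGraph.mem_edgeSet]
    exact hx1A'.2
  · intro e he
    rw [SimpleGraph.Walk.edges_cons] at he
    rcases hl : q.edges with _ | ⟨g, gs⟩
    · rw [hl] at he
      simp only [List.getLast?_singleton, Option.some_inj] at he
      subst he
      rw [SimpleGraph.mem_edgeSet]
      exact hx1A'.2
    · rw [hl, List.getLast?_cons_cons] at he
      exact hlt' e (by rw [hl]; exact he)

end Exists

section Augment

variable {G M : SimpleGraph V} {k : ℕ}

/-- the symmetric difference of `M` with the edges of a walk `p` -/
def toggleW (M : SimpleGraph V) {G : SimpleGraph V} {a b : V} (p : G.Walk a b) :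
    SimpleGraph V where
  Adj x y := Xor' (M.Adj x y) (s(x, y) ∈ p.edges) ∧ x ≠ y
  symm := ⟨by
    rintro x y ⟨h1, h2⟩
    refine ⟨?_, h2.symm⟩
    rwa [M.adj_comm, Sym2.eq_swap] at h1⟩
  loopless := ⟨fun x h => h.2 rfl⟩

lemma toggleW_adj {a b : V} (p : G.Walk a b) (x y : V) :
    (toggleW M p).Adj x y ↔ (Xor' (M.Adj x y) (s(x, y) ∈ p.edges) ∧ x ≠ y) := Iff.rfl

lemma symmDiff_pair {α : Type*} (N : Set α) {s t : α} (ht : t ∈ N) (hs : s ∉ N) (hst : s ≠ t) :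
    (N \ {t, s} ∪ ({t, s} \ N)) = insert s (N \ {t}) := by
  ext x
  by_cases hxs : x = s
  · subst hxs
    simp [hs, hst]
  · by_cases hxt : x = t
    · subst hxt
      simp [ht, hxs, Ne.symm hxs]
    · simp [hxs, hxt]

lemma symmDiff_single {α : Type*} (N : Set α) {s : α} (hs : s ∉ N) :
    (N \ {s} ∪ ({s} \ N)) = insert s N := by
  ext x
  by_cases hxs : x = s
  · subst hxs
    simp [hs]
  · simp [hxs]

lemma augment [Fintype V] (hMG : M ≤ G) (hlim : ∀ v : V, mdeg M v ≤ k)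
    {a b : V} (p : G.Walk a b) (haug : IsAugTrail G M k p) (hpath : p.IsPath) :
    ∃ M' : SimpleGraph V, IsKLimitedSpanning G M' k ∧ sigmaDef M' k < sigmaDef M k := by
  classical
  obtain ⟨halt, hne, hhead, hlast, hda, hdb, hfillX, hclosedX⟩ := haug
  have hchain : p.edges.Chain' (altRel M) := ((isAltTrail_iff p).mp halt).2
  have hL : 0 < p.length := by rw [← p.length_edges]; exact List.length_pos_iff.mpr hne
  have hpar := chain'_parity (S := M.edgeSet) hchain hhead
  have hinj : ∀ i j, i ≤ p.length → j ≤ p.length → p.getVert i = p.getVert j → i = j := by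
    intro i j hi hj heq
    have h1 : p.support.get ⟨i, by rw [p.length_support]; omega⟩
        = p.support.get ⟨j, by rw [p.length_support]; omega⟩ := by
      rw [p.support_get', p.support_get']
      exact heq
    have := List.nodup_iff_injective_get.mp hpath.support_nodup h1
    simpa using this
  have hab : a ≠ b := by
    intro h
    have := hinj 0 p.length (by omega) le_rfl
      (by rw [p.getVert_zero, p.getVert_length]; exact h)
    omega
  have hedge_mem : ∀ w x : V, s(w, x) ∈ p.edges ↔
      ∃ i, i < p.length ∧ ((w = p.getVert i ∧ x = p.getVert (i+1)) ∨
        (w = p.getVert (i+1) ∧ x = p.getVert i)) := by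
    intro w x
    rw [List.mem_iff_get]
    constructor
    · rintro ⟨⟨i, hi⟩, hg⟩
      rw [SimpleGraph.Walk.edges_get'] at hg
      rw [p.length_edges] at hi
      refine ⟨i, hi, ?_⟩
      rw [Sym2.eq_iff] at hg
      rcases hg with ⟨h1, h2⟩ | ⟨h1, h2⟩
      · exact Or.inl ⟨h1.symm, h2.symm⟩
      · exact Or.inr ⟨h2.symm, h1.symm⟩
    · rintro ⟨i, hi, hcase⟩
      refine ⟨⟨i, by rw [p.length_edges]; omega⟩, ?_⟩
      rw [SimpleGraph.Walk.edges_get', Sym2.eq_iff]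
      rcases hcase with ⟨h1, h2⟩ | ⟨h1, h2⟩
      · exact Or.inl ⟨h1.symm, h2.symm⟩
      · exact Or.inr ⟨h2.symm, h1.symm⟩
  set Np : V → Set V := fun w => {x | s(w, x) ∈ p.edges} with hNpdef
  have hNp_a : Np a = {p.getVert 1} := by
    ext x
    simp only [hNpdef, Set.mem_setOf_eq, Set.mem_singleton_iff]
    rw [hedge_mem]
    constructor
    · rintro ⟨i, hi, ⟨h1, h2⟩ | ⟨h1, h2⟩⟩
      · have hi0 : 0 = i := hinj 0 i (by omega) (by omega) (by rw [p.getVert_zero, ← h1])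
        rw [← hi0] at h2
        exact h2
      · have hi0 : 0 = i + 1 := hinj 0 (i+1) (by omega) (by omega)
          (by rw [p.getVert_zero, ← h1])
        omega
    · intro h
      exact ⟨0, hL, Or.inl ⟨p.getVert_zero.symm, h⟩⟩
  have hNp_b : Np b = {p.getVert (p.length - 1)} := by
    ext x
    simp only [hNpdef, Set.mem_setOf_eq, Set.mem_singleton_iff]
    rw [hedge_mem]
    constructor
    · rintro ⟨i, hi, ⟨h1, h2⟩ | ⟨h1, h2⟩⟩
      · have hiL : p.length = i := hinj p.length i le_rfl (by omega)
          (by rw [p.getVert_length, ← h1])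
        omega
      · have hiL : p.length = i + 1 := hinj p.length (i+1) le_rfl (by omega)
          (by rw [p.getVert_length, ← h1])
        rw [show p.length - 1 = i from by omega]
        exact h2
    · intro h
      refine ⟨p.length - 1, by omega, Or.inr ⟨?_, ?_⟩⟩
      · rw [show p.length - 1 + 1 = p.length from by omega, p.getVert_length]
      · exact h
  have hNp_mid : ∀ m, 0 < m → m < p.length →
      Np (p.getVert m) = {p.getVert (m-1), p.getVert (m+1)} := by
    intro m hm0 hmL
    ext x
    simp only [hNpdef, Set.mem_setOf_eq, Set.mem_insert_iff, Set.mem_singleton_iff]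
    rw [hedge_mem]
    constructor
    · rintro ⟨i, hi, ⟨h1, h2⟩ | ⟨h1, h2⟩⟩
      · have : m = i := hinj m i (by omega) (by omega) h1
        rw [← this] at h2
        exact Or.inr h2
      · have : m = i + 1 := hinj m (i+1) (by omega) (by omega) h1
        rw [show i = m - 1 from by omega] at h2
        exact Or.inl h2
    · rintro (h | h)
      · refine ⟨m - 1, by omega, Or.inr ⟨?_, h⟩⟩
        rw [show m - 1 + 1 = m from by omega]
      · exact ⟨m, hmL, Or.inl ⟨rfl, h⟩⟩
  have hNp_out : ∀ w, w ∉ p.support → Np w = ∅ := by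
    intro w hw
    ext x
    simp only [hNpdef, Set.mem_setOf_eq, Set.mem_empty_iff_false, iff_false]
    intro hmem
    exact hw (p.fst_mem_support_of_mem_edges hmem)
  set M' := toggleW M p with hM'
  have hN' : ∀ w, M'.neighborSet w
      = (M.neighborSet w \ Np w) ∪ (Np w \ M.neighborSet w) := by
    intro w
    ext x
    rw [SimpleGraph.mem_neighborSet, hM', toggleW_adj]
    simp only [Set.mem_union, Set.mem_diff, hNpdef, Set.mem_setOf_eq,
      SimpleGraph.mem_neighborSet, Xor', Xor]
    have hxw : s(w, x) ∈ p.edges → w ≠ x := by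
      intro hmem heq
      subst heq
      exact G.irrefl ((SimpleGraph.mem_edgeSet _).mp (p.edges_subset_edgeSet hmem))
    have hMne : M.Adj w x → w ≠ x := fun h => M.ne_of_adj h
    tauto
  have hmdeg' : ∀ w, mdeg M' w
      = ((M.neighborSet w \ Np w) ∪ (Np w \ M.neighborSet w)).ncard := by
    intro w
    rw [mdeg, hN']
  -- first and last edges are not in M
  have hfirst_nm : p.getVert 1 ∉ M.neighborSet a := by
    have h0 : p.edges.get ⟨0, by rw [p.length_edges]; omega⟩ = s(a, p.getVert 1) := by
      rw [SimpleGraph.Walk.edges_get', p.getVert_zero]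
    have hnm := hhead (s(a, p.getVert 1)) (by
      rw [head?_of_get (by rw [p.length_edges]; omega), h0])
    intro hmem
    exact hnm ((SimpleGraph.mem_edgeSet _).mpr hmem)
  have hlast_nm : p.getVert (p.length - 1) ∉ M.neighborSet b := by
    have h0 : p.edges.get ⟨p.edges.length - 1, by rw [p.length_edges]; omega⟩
        = s(p.getVert (p.length - 1), b) := by
      rw [SimpleGraph.Walk.edges_get']
      rw [p.length_edges, show p.length - 1 + 1 = p.length from by omega, p.getVert_length]
    have hnm := hlast (s(p.getVert (p.length - 1), b)) (by
      rw [getLast?_of_get (by rw [p.length_edges]; omega), h0])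
    intro hmem
    rw [SimpleGraph.mem_neighborSet] at hmem
    exact hnm ((SimpleGraph.mem_edgeSet _).mpr hmem.symm)
  have hdeg_a : mdeg M' a = mdeg M a + 1 := by
    rw [hmdeg' a, hNp_a, symmDiff_single _ hfirst_nm,
      Set.ncard_insert_of_notMem hfirst_nm, mdeg]
  have hdeg_b : mdeg M' b = mdeg M b + 1 := by
    rw [hmdeg' b, hNp_b, symmDiff_single _ hlast_nm,
      Set.ncard_insert_of_notMem hlast_nm, mdeg]
  have hdeg_mid : ∀ m, 0 < m → m < p.length → mdeg M' (p.getVert m) = mdeg M (p.getVert m) := by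
    intro m hm0 hmL
    have hprev : p.edges.get ⟨m - 1, by rw [p.length_edges]; omega⟩
        = s(p.getVert (m-1), p.getVert m) := by
      rw [SimpleGraph.Walk.edges_get', show m - 1 + 1 = m from by omega]
    have hnext : p.edges.get ⟨m, by rw [p.length_edges]; omega⟩
        = s(p.getVert m, p.getVert (m+1)) := by
      rw [SimpleGraph.Walk.edges_get']
    have hparprev := hpar (m-1) (by rw [p.length_edges]; omega)
    have hparnext := hpar m (by rw [p.length_edges]; omega)
    rw [hprev] at hparprev
    rw [hnext] at hparnext
    have hne_pm : p.getVert (m-1) ≠ p.getVert (m+1) := by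
      intro h
      have := hinj (m-1) (m+1) (by omega) (by omega) h
      omega
    rcases Nat.even_or_odd m with hev | hod
    · have hprevM : p.getVert (m-1) ∈ M.neighborSet (p.getVert m) := by
        have : Odd (m - 1) := by
          rw [Nat.odd_iff]
          rw [Nat.even_iff] at hev
          omega
        have hmem := hparprev.mpr this
        rw [SimpleGraph.mem_edgeSet] at hmem
        exact hmem.symm
      have hnextM : p.getVert (m+1) ∉ M.neighborSet (p.getVert m) := by
        intro hmem
        have : Odd m := hparnext.mp ((SimpleGraph.mem_edgeSet _).mpr hmem)
        rw [Nat.odd_iff] at this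
        rw [Nat.even_iff] at hev
        omega
      rw [hmdeg' _, hNp_mid m hm0 hmL,
        symmDiff_pair _ hprevM hnextM hne_pm.symm, Set.ncard_exchange hnextM hprevM, mdeg]
    · have hprevM : p.getVert (m-1) ∉ M.neighborSet (p.getVert m) := by
        intro hmem
        have : Odd (m-1) := hparprev.mp (by
          rw [SimpleGraph.mem_edgeSet]
          exact hmem.symm)
        rw [Nat.odd_iff] at this
        rw [Nat.odd_iff] at hod
        omega
      have hnextM : p.getVert (m+1) ∈ M.neighborSet (p.getVert m) := by
        have hmem := hparnext.mpr hod
        rw [SimpleGraph.mem_edgeSet] at hmem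
        exact hmem
      rw [hmdeg' _, hNp_mid m hm0 hmL, Set.pair_comm,
        symmDiff_pair _ hnextM hprevM hne_pm, Set.ncard_exchange hprevM hnextM, mdeg]
  have hdeg_other : ∀ w, w ≠ a → w ≠ b → mdeg M' w = mdeg M w := by
    intro w hwa hwb
    by_cases hws : w ∈ p.support
    · obtain ⟨m, hm, hmL⟩ := SimpleGraph.Walk.mem_support_iff_exists_getVert.mp hws
      have hm0 : m ≠ 0 := by
        intro h
        rw [h, p.getVert_zero] at hm
        exact hwa hm.symm
      have hmL' : m ≠ p.length := by
        intro h
        rw [h, p.getVert_length] at hm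
        exact hwb hm.symm
      rw [← hm]
      exact hdeg_mid m (by omega) (by omega)
    · rw [hmdeg' w, hNp_out w hws]
      simp [mdeg]
  refine ⟨M', ⟨?_, ?_⟩, ?_⟩
  · -- M' ≤ G
    intro x y h
    rw [toggleW_adj] at h
    rcases h.1 with ⟨h1, _⟩ | ⟨h1, _⟩
    · exact hMG h1
    · exact (SimpleGraph.mem_edgeSet _).mp (p.edges_subset_edgeSet h1)
  · -- degrees bounded
    intro v
    by_cases hva : v = a
    · rw [hva, hdeg_a]; omega
    · by_cases hvb : v = b
      · rw [hvb, hdeg_b]; omega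
      · rw [hdeg_other v hva hvb]; exact hlim v
  · -- deficiency decreases
    apply Finset.sum_lt_sum
    · intro v _
      by_cases hva : v = a
      · rw [hva, hdeg_a]; omega
      · by_cases hvb : v = b
        · rw [hvb, hdeg_b]; omega
        · rw [hdeg_other v hva hvb]
    · refine ⟨a, Finset.mem_univ a, ?_⟩
      rw [hdeg_a]
      omega

end Augment

section Final

variable {G : SimpleGraph V} {k : ℕ}

lemma toFactor [Fintype V]
    (H : ∀ M : SimpleGraph V, IsKLimitedSpanning G M k → 0 < sigmaDef M k →
      ∃ (a b : V) (p : G.Walk a b), IsAugTrail G M k p ∧ p.IsPath) :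
    ∃ F : SimpleGraph V, IsKFactor G F k := by
  have key : ∀ n : ℕ, ∀ M : SimpleGraph V, IsKLimitedSpanning G M k → sigmaDef M k ≤ n →
      ∃ F : SimpleGraph V, IsKFactor G F k := by
    intro n
    induction n with
    | zero =>
      intro M hM hσ
      refine ⟨M, hM.1, fun v => ?_⟩
      have h0 : sigmaDef M k = 0 := by omega
      have h1 := (Finset.sum_eq_zero_iff).mp h0 v (Finset.mem_univ v)
      have h2 := hM.2 v
      omega
    | succ n ih =>
      intro M hM hσ
      by_cases h0 : sigmaDef M k = 0
      · refine ⟨M, hM.1, fun v => ?_⟩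
        have h1 := (Finset.sum_eq_zero_iff).mp h0 v (Finset.mem_univ v)
        have h2 := hM.2 v
        omega
      · obtain ⟨a, b, p, haug, hpath⟩ := H M hM (by omega)
        obtain ⟨M', hM', hlt⟩ := augment hM.1 hM.2 p haug hpath
        exact ih M' hM' (by omega)
  refine key (sigmaDef (⊥ : SimpleGraph V) k) ⊥ ⟨bot_le, fun v => ?_⟩ le_rfl
  have h1 : mdeg (⊥ : SimpleGraph V) v = 0 := by
    have h2 : (⊥ : SimpleGraph V).neighborSet v = ∅ := by
      ext x
      simp
    rw [mdeg, h2, Set.ncard_empty]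
  omega

end Final

/-- Theorem 3.1: A bipartite (2-colorable) graph `G` has a `k`-factor iff
for every `k`-limited spanning subgraph `M` with `σ(M) > 0` there is an `M`-augmenting
trail which is a path. -/
theorem kFactor_iff_augPaths_of_bipartite [Fintype V] (G : SimpleGraph V) (k : ℕ)
    (hk : 1 ≤ k) (hbip : G.Colorable 2) :
    (∃ F : SimpleGraph V, IsKFactor G F k) ↔
      (∀ M : SimpleGraph V, IsKLimitedSpanning G M k → 0 < sigmaDef M k →
        ∃ (a b : V) (p : G.Walk a b), IsAugTrail G M k p ∧ p.IsPath) := by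
  constructor
  · rintro ⟨F, hF⟩ M hM hσ
    obtain ⟨u, hu⟩ : ∃ u : V, mdeg M u < k := by
      by_contra hcon
      push_neg at hcon
      have : sigmaDef M k = 0 := Finset.sum_eq_zero (fun v _ => by have := hcon v; omega)
      omega
    obtain ⟨a0, b0, p0, hp0⟩ := exists_WW hF hM.1 hM.2 hu
    have C : G.Coloring (ZMod 2) := hbip.some
    set S : Set ℕ := {n | ∃ a b : V, ∃ p : G.Walk a b, WW G M k p ∧ p.length = n} with hS
    have hSne : S.Nonempty := ⟨p0.length, a0, b0, p0, hp0, rfl⟩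
    obtain ⟨n, hnS, hminS⟩ := Nat.lt_wfRel.wf.has_min S hSne
    obtain ⟨a, b, p, hWW, hlen⟩ := hnS
    refine ⟨a, b, p, WW.min_aug C hM.2 p hWW ?_⟩
    intro a' b' q hq
    by_contra hcon
    push_neg at hcon
    have hmem : q.length ∈ S := ⟨a', b', q, hq, rfl⟩
    have hgoal : q.length < n := by omega
    exact hminS q.length hmem hgoal
  · intro H
    exact toFactor H
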